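/- arXiv:1303.0975 — 2 statements merged into one kernel-verified Lean document; each statement's English description precedes it below -/
import Mathlib

section
/- Let b, σ ∈ ℝ and define the differential operator 𝓛 by (𝓛f)(x) = b·x·f'(x) + (σ²/2)·f''(x). Then for all m, n ∈ ℕ the L²(ℝ) inner product of h_m with 𝓛h_n is given by: ∫_ℝ h_m(x)(𝓛h_n)(x) dx = −b/2 − σ²(2n+1)/8 if m = n; = (−b/2 + σ²/8)·√((n+1)(n+2)) if m = n+2; = (b/2 + σ²/8)·√(n(n−1)) if m = n−2 (with n ≥ 2); and = 0 in all other cases. -/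
open MeasureTheory Real Filter

noncomputable def hermiteP (n : ℕ) (x : ℝ) : ℝ :=
  Polynomial.aeval x (Polynomial.hermite n)

noncomputable def gaussDensity (x : ℝ) : ℝ :=
  (2 * Real.pi) ^ (-(1:ℝ)/2) * Real.exp (-x ^ 2 / 2)

noncomputable def hermiteB (n : ℕ) (x : ℝ) : ℝ :=
  (2 * Real.pi) ^ (-(1:ℝ)/4) * Real.exp (-x ^ 2 / 4) * hermiteP n x / Real.sqrt (Nat.factorial n)

/-- The generator of the linear diffusion dX = bX dt + σ dV. -/
noncomputable def genL (b σ : ℝ) (f : ℝ → ℝ) (x : ℝ) : ℝ :=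
  b * x * deriv f x + σ ^ 2 / 2 * deriv (deriv f) x

section Aux
open Polynomial Asymptotics

/-! ### Integrability of polynomial × Gaussian -/

lemma tendsto_poly_gauss_atTop (p : ℝ[X]) {c : ℝ} (hc : 0 < c) :
    Tendsto (fun x : ℝ => eval x p * Real.exp (-c * x ^ 2)) atTop (nhds 0) := by
  have key : ∀ i : ℕ, Tendsto (fun x : ℝ => x ^ i * Real.exp (-c * x ^ 2)) atTop (nhds 0) := by
    intro i
    have h1 : (fun x : ℝ => x ^ (i : ℝ) * Real.exp (-c * x ^ 2)) =o[atTop]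
        fun x => Real.exp (-(1/2) * x) := rpow_mul_exp_neg_mul_sq_isLittleO_exp_neg hc i
    have h2 : (fun x : ℝ => x ^ i * Real.exp (-c * x ^ 2)) =ᶠ[atTop]
        fun x => x ^ (i : ℝ) * Real.exp (-c * x ^ 2) := by
      filter_upwards [eventually_ge_atTop (0:ℝ)] with x hx
      rw [Real.rpow_natCast]
    have h3 : (fun x : ℝ => x ^ i * Real.exp (-c * x ^ 2)) =o[atTop]
        fun x => Real.exp (-(1/2) * x) := h1.congr' h2.symm (EventuallyEq.refl _ _)
    refine h3.isBigO.trans_tendsto ?_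
    have : Tendsto (fun x : ℝ => -(1/2) * x) atTop atBot :=
      (tendsto_const_mul_atBot_of_neg (by norm_num : -(1/2:ℝ) < 0)).mpr tendsto_id
    exact tendsto_exp_atBot.comp this
  have : (fun x : ℝ => eval x p * Real.exp (-c * x ^ 2)) =
      fun x : ℝ => ∑ i ∈ Finset.range (p.natDegree + 1),
        p.coeff i * (x ^ i * Real.exp (-c * x ^ 2)) := by
    funext x
    rw [eval_eq_sum_range, Finset.sum_mul]
    simp [mul_assoc]
  rw [this]
  have := tendsto_finset_sum (Finset.range (p.natDegree + 1))
    (fun i _ => ((key i).const_mul (p.coeff i)))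
  simpa using this

lemma tendsto_poly_gauss_cocompact (p : ℝ[X]) {c : ℝ} (hc : 0 < c) :
    Tendsto (fun x : ℝ => eval x p * Real.exp (-c * x ^ 2)) (cocompact ℝ) (nhds 0) := by
  rw [cocompact_eq_atBot_atTop]
  refine Tendsto.sup ?_ (tendsto_poly_gauss_atTop p hc)
  have h := (tendsto_poly_gauss_atTop (p.comp (-X)) hc).comp tendsto_neg_atBot_atTop
  convert h using 1
  funext x
  simp [Function.comp, eval_comp]

lemma integrable_poly_gauss (p : ℝ[X]) :
    Integrable (fun x : ℝ => eval x p * Real.exp (-x ^ 2 / 2)) := by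
  have hg : Integrable (fun x : ℝ => Real.exp (-(1/4 : ℝ) * x ^ 2)) :=
    integrable_exp_neg_mul_sq (by norm_num)
  refine (Continuous.locallyIntegrable (by fun_prop)).integrable_of_isBigO_cocompact
    (g := fun x : ℝ => Real.exp (-(1/4 : ℝ) * x ^ 2)) ?_ ?_
  · refine IsLittleO.isBigO ?_
    rw [isLittleO_iff_tendsto (fun x h => absurd h (Real.exp_ne_zero _))]
    have := tendsto_poly_gauss_cocompact p (show (0:ℝ) < 1/4 by norm_num)
    refine this.congr (fun x => ?_)
    rw [eq_div_iff (Real.exp_ne_zero _), mul_assoc, ← Real.exp_add]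
    ring_nf
  · exact hg.integrableAtFilter _

lemma aeval_eq_eval (p : ℤ[X]) (x : ℝ) :
    (aeval x p : ℝ) = eval x (p.map (Int.castRingHom ℝ)) := by
  rw [aeval_def, ← eval_map]; rfl

lemma hermiteP_eq_eval (n : ℕ) (x : ℝ) :
    hermiteP n x = eval x ((hermite n).map (Int.castRingHom ℝ)) :=
  aeval_eq_eval _ x

lemma integrable_of_eq (f : ℝ → ℝ) (p : ℝ[X])
    (h : ∀ x, f x = eval x p * Real.exp (-x ^ 2 / 2)) : Integrable f := by
  rw [show f = fun x => eval x p * Real.exp (-x ^ 2 / 2) from funext h]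
  exact integrable_poly_gauss p

/-! ### Hermite polynomial identities -/

lemma derivative_hermite_succ' (n : ℕ) :
    derivative (hermite (n + 1)) = ((n : ℤ[X]) + 1) * hermite n := by
  induction n with
  | zero => simp [hermite_one, hermite_zero]
  | succ k ih =>
    have h2 : derivative (hermite k) = X * hermite k - hermite (k+1) := by
      rw [hermite_succ]; ring
    rw [hermite_succ (k+1), derivative_sub, derivative_mul, derivative_X, ih,
      derivative_mul, h2]
    simp only [derivative_add, derivative_natCast, derivative_one]
    push_cast
    ring

lemma X_mul_hermite (n : ℕ) :
    (X : ℤ[X]) * hermite (n + 1) = hermite (n + 2) + ((n : ℤ[X]) + 1) * hermite n := by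
  have h := hermite_succ (n + 1)
  rw [derivative_hermite_succ' n] at h
  rw [h]; ring

lemma recv (j : ℕ) (x : ℝ) :
    x * hermiteP (j+1) x = hermiteP (j+2) x + ((j:ℝ)+1) * hermiteP j x := by
  have := congrArg (fun p : ℤ[X] => (aeval x p : ℝ)) (X_mul_hermite j)
  simpa [hermiteP] using this

lemma dval (j : ℕ) (x : ℝ) :
    (aeval x (derivative (hermite (j+1))) : ℝ) = ((j:ℝ)+1) * hermiteP j x := by
  rw [derivative_hermite_succ']
  simp [hermiteP]

lemma ddval (k : ℕ) (x : ℝ) :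
    (aeval x (derivative (derivative (hermite (k+2)))) : ℝ)
      = ((k:ℝ)+2) * ((k:ℝ)+1) * hermiteP k x := by
  rw [derivative_hermite_succ' (k+1), derivative_mul, derivative_hermite_succ' k]
  simp only [derivative_add, derivative_natCast, derivative_one, map_add, map_mul, map_natCast,
    map_one, map_zero, add_zero, zero_add, zero_mul]
  push_cast
  simp [hermiteP]
  ring

/-! ### Orthogonality -/

lemma hasDerivAt_gauss (x : ℝ) :
    HasDerivAt (fun x : ℝ => Real.exp (-x ^ 2 / 2)) (-x * Real.exp (-x ^ 2 / 2)) x := by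
  have h : HasDerivAt (fun x : ℝ => -x ^ 2 / 2) (-x) x := by
    have := ((hasDerivAt_pow 2 x).neg).div_const 2
    refine this.congr_deriv ?_
    simp; ring
  simpa [mul_comm] using h.exp

lemma core (m n : ℕ) :
    (∫ x : ℝ, hermiteP (m+1) x * hermiteP n x * Real.exp (-x ^ 2 / 2)) =
    ∫ x : ℝ, hermiteP m x * (aeval x (derivative (hermite n)) : ℝ) * Real.exp (-x ^ 2 / 2) := by
  set F : ℝ → ℝ := fun x => hermiteP m x * hermiteP n x * Real.exp (-x ^ 2 / 2) with hF
  have hderiv : ∀ x : ℝ, HasDerivAt F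
      (hermiteP m x * (aeval x (derivative (hermite n)) : ℝ) * Real.exp (-x ^ 2 / 2)
        - hermiteP (m+1) x * hermiteP n x * Real.exp (-x ^ 2 / 2)) x := by
    intro x
    have h1 : HasDerivAt (fun y : ℝ => hermiteP m y)
        (aeval x (derivative (hermite m)) : ℝ) x := (hermite m).hasDerivAt_aeval x
    have h2 : HasDerivAt (fun y : ℝ => hermiteP n y)
        (aeval x (derivative (hermite n)) : ℝ) x := (hermite n).hasDerivAt_aeval x
    have h3 := (h1.mul h2).mul (hasDerivAt_gauss x)
    have hx : hermiteP (m+1) x = x * hermiteP m x - (aeval x (derivative (hermite m)) : ℝ) := by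
      simp [hermiteP, hermite_succ]
    refine h3.congr_deriv ?_
    rw [hx]; simp only [Pi.mul_apply]; ring
  have hi1 : Integrable (fun x : ℝ =>
      hermiteP m x * (aeval x (derivative (hermite n)) : ℝ) * Real.exp (-x ^ 2 / 2)) := by
    refine integrable_of_eq _ ((hermite m).map (Int.castRingHom ℝ) *
      (derivative (hermite n)).map (Int.castRingHom ℝ)) fun x => ?_
    simp [hermiteP_eq_eval, aeval_eq_eval]
  have hi2 : Integrable (fun x : ℝ =>
      hermiteP (m+1) x * hermiteP n x * Real.exp (-x ^ 2 / 2)) := by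
    refine integrable_of_eq _ ((hermite (m+1)).map (Int.castRingHom ℝ) *
      (hermite n).map (Int.castRingHom ℝ)) fun x => ?_
    simp [hermiteP_eq_eval]
  have hiF : Integrable F := by
    refine integrable_of_eq _ ((hermite m).map (Int.castRingHom ℝ) *
      (hermite n).map (Int.castRingHom ℝ)) fun x => ?_
    simp [hF, hermiteP_eq_eval]
  have h0 := integral_eq_zero_of_hasDerivAt_of_integrable hderiv (hi1.sub hi2) hiF
  rw [integral_sub hi1 hi2] at h0
  linarith [h0]

noncomputable def HI (m n : ℕ) : ℝ :=
  ∫ x : ℝ, hermiteP m x * hermiteP n x * Real.exp (-x ^ 2 / 2)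

lemma HI_succ_zero (m : ℕ) : HI (m+1) 0 = 0 := by
  rw [HI, core m 0]
  simp [hermite_zero]

lemma HI_succ_succ (m n : ℕ) : HI (m+1) (n+1) = (n+1) * HI m n := by
  rw [HI, core m (n+1), derivative_hermite_succ']
  rw [show (∫ x : ℝ, hermiteP m x * (aeval x (((n : ℤ[X]) + 1) * hermite n) : ℝ)
      * Real.exp (-x ^ 2 / 2)) = ∫ x : ℝ, ((n : ℝ)+1) *
      (hermiteP m x * hermiteP n x * Real.exp (-x ^ 2 / 2)) from by
    congr 1; funext x; simp [hermiteP]; ring]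
  rw [integral_const_mul]; rfl

lemma HI_symm (m n : ℕ) : HI m n = HI n m := by
  unfold HI; congr 1; funext x; ring

lemma HI_eq (m n : ℕ) :
    HI m n = if m = n then Real.sqrt (2*Real.pi) * (Nat.factorial m) else 0 := by
  induction m generalizing n with
  | zero =>
    cases n with
    | zero =>
      simp only [if_pos rfl, Nat.factorial_zero, Nat.cast_one, mul_one, HI]
      have : (fun x : ℝ => hermiteP 0 x * hermiteP 0 x * Real.exp (-x ^ 2 / 2))
          = fun x : ℝ => Real.exp (-(1/2 : ℝ) * x ^ 2) := by
        funext x; simp [hermiteP, hermite_zero]; ring_nf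
      rw [this, integral_gaussian, show Real.pi / (1/2) = 2 * Real.pi by ring]
      simp
    | succ k =>
      rw [HI_symm, HI_succ_zero]
      simp [Nat.succ_ne_zero]
  | succ m ih =>
    cases n with
    | zero => rw [HI_succ_zero]; simp [Nat.succ_ne_zero]
    | succ k =>
      rw [HI_succ_succ, ih k]
      by_cases h : m = k
      · subst h
        simp [Nat.factorial_succ]
        ring
      · simp only [mul_ite, mul_zero]
        rw [if_neg h, if_neg (fun hh => h (Nat.succ_injective hh))]


/-! ### Derivatives of the Hermite basis functions -/

lemma hasDerivAt_qgauss (x : ℝ) :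
    HasDerivAt (fun x : ℝ => Real.exp (-x ^ 2 / 4)) (Real.exp (-x ^ 2 / 4) * (-x/2)) x := by
  have h : HasDerivAt (fun x : ℝ => -x ^ 2 / 4) (-x/2) x := by
    have := ((hasDerivAt_pow 2 x).neg).div_const 4
    refine this.congr_deriv ?_
    simp; ring
  exact h.exp

noncomputable def D1 (n : ℕ) (x : ℝ) : ℝ :=
  (2 * Real.pi) ^ (-(1:ℝ)/4) * Real.exp (-x ^ 2 / 4) *
    ((aeval x (derivative (hermite n)) : ℝ) - x/2 * hermiteP n x) / Real.sqrt (Nat.factorial n)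

noncomputable def D2 (n : ℕ) (x : ℝ) : ℝ :=
  (2 * Real.pi) ^ (-(1:ℝ)/4) * Real.exp (-x ^ 2 / 4) *
    ((aeval x (derivative (derivative (hermite n))) : ℝ)
      - x * (aeval x (derivative (hermite n)) : ℝ)
      + (x^2/4 - 1/2) * hermiteP n x) / Real.sqrt (Nat.factorial n)

lemma hasDerivAt_hermiteB (n : ℕ) (x : ℝ) :
    HasDerivAt (hermiteB n) (D1 n x) x := by
  have hc := (hasDerivAt_qgauss x).const_mul ((2 * Real.pi) ^ (-(1:ℝ)/4))
  have hP : HasDerivAt (fun y : ℝ => hermiteP n y)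
      (aeval x (derivative (hermite n)) : ℝ) x := (hermite n).hasDerivAt_aeval x
  have h := (hc.mul hP).div_const (Real.sqrt (Nat.factorial n))
  refine h.congr_deriv ?_
  rw [D1]; ring

lemma deriv_hermiteB (n : ℕ) : deriv (hermiteB n) = D1 n :=
  funext fun x => (hasDerivAt_hermiteB n x).deriv

lemma hasDerivAt_D1 (n : ℕ) (x : ℝ) : HasDerivAt (D1 n) (D2 n x) x := by
  have hc := (hasDerivAt_qgauss x).const_mul ((2 * Real.pi) ^ (-(1:ℝ)/4))
  have hP : HasDerivAt (fun y : ℝ => hermiteP n y)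
      (aeval x (derivative (hermite n)) : ℝ) x := (hermite n).hasDerivAt_aeval x
  have hdP : HasDerivAt (fun y : ℝ => (aeval y (derivative (hermite n)) : ℝ))
      (aeval x (derivative (derivative (hermite n))) : ℝ) x :=
    (derivative (hermite n)).hasDerivAt_aeval x
  have hg : HasDerivAt (fun y : ℝ => (aeval y (derivative (hermite n)) : ℝ)
      - y/2 * hermiteP n y)
      ((aeval x (derivative (derivative (hermite n))) : ℝ)
        - (1/2 * hermiteP n x + x/2 * (aeval x (derivative (hermite n)) : ℝ))) x := by
    refine hdP.sub ?_
    have := ((hasDerivAt_id x).div_const 2).mul hP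
    refine this.congr_deriv ?_
    simp only [id_eq]
  have h := (hc.mul hg).div_const (Real.sqrt (Nat.factorial n))
  refine HasDerivAt.congr_deriv h ?_
  rw [D2]; ring

lemma genL_hermiteB (b σ : ℝ) (n : ℕ) (x : ℝ) :
    genL b σ (hermiteB n) x = b * x * D1 n x + σ^2/2 * D2 n x := by
  rw [genL, deriv_hermiteB n, (hasDerivAt_D1 n x).deriv]

lemma integrand_eq (b σ : ℝ) (n m : ℕ) (x : ℝ) :
    hermiteB m x * genL b σ (hermiteB n) x =
      (2 * Real.pi) ^ (-(1:ℝ)/2) /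
        (Real.sqrt (Nat.factorial m) * Real.sqrt (Nat.factorial n)) *
      ((b * x * ((aeval x (derivative (hermite n)) : ℝ) - x/2 * hermiteP n x)
        + σ^2/2 * ((aeval x (derivative (derivative (hermite n))) : ℝ)
            - x * (aeval x (derivative (hermite n)) : ℝ)
            + (x^2/4 - 1/2) * hermiteP n x))
        * hermiteP m x * Real.exp (-x ^ 2 / 2)) := by
  have hc2 : (2 * Real.pi) ^ (-(1:ℝ)/4) * (2 * Real.pi) ^ (-(1:ℝ)/4)
      = (2 * Real.pi) ^ (-(1:ℝ)/2) := by
    rw [← Real.rpow_add (by positivity)]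
    norm_num
  have he : Real.exp (-x ^ 2 / 4) * Real.exp (-x ^ 2 / 4) = Real.exp (-x ^ 2 / 2) := by
    rw [← Real.exp_add]; ring_nf
  rw [genL_hermiteB, hermiteB, D1, D2]
  rw [show (2 * Real.pi) ^ (-(1:ℝ)/4) * Real.exp (-x ^ 2 / 4) * hermiteP m x /
        Real.sqrt (Nat.factorial m) *
      (b * x * ((2 * Real.pi) ^ (-(1:ℝ)/4) * Real.exp (-x ^ 2 / 4) *
        ((aeval x (derivative (hermite n)) : ℝ) - x/2 * hermiteP n x) /
        Real.sqrt (Nat.factorial n))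
      + σ^2/2 * ((2 * Real.pi) ^ (-(1:ℝ)/4) * Real.exp (-x ^ 2 / 4) *
        ((aeval x (derivative (derivative (hermite n))) : ℝ)
          - x * (aeval x (derivative (hermite n)) : ℝ)
          + (x^2/4 - 1/2) * hermiteP n x) / Real.sqrt (Nat.factorial n)))
      = ((2 * Real.pi) ^ (-(1:ℝ)/4) * (2 * Real.pi) ^ (-(1:ℝ)/4)) *
        (Real.exp (-x ^ 2 / 4) * Real.exp (-x ^ 2 / 4)) /
        (Real.sqrt (Nat.factorial m) * Real.sqrt (Nat.factorial n)) *
      ((b * x * ((aeval x (derivative (hermite n)) : ℝ) - x/2 * hermiteP n x)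
        + σ^2/2 * ((aeval x (derivative (derivative (hermite n))) : ℝ)
            - x * (aeval x (derivative (hermite n)) : ℝ)
            + (x^2/4 - 1/2) * hermiteP n x)) * hermiteP m x) from by ring]
  rw [hc2, he]
  ring


/-! ### The expansion of the generator in the Hermite basis -/

lemma Qid (b σ : ℝ) (n : ℕ) (x : ℝ) :
    b * x * ((aeval x (derivative (hermite n)) : ℝ) - x/2 * hermiteP n x)
      + σ^2/2 * ((aeval x (derivative (derivative (hermite n))) : ℝ)
          - x * (aeval x (derivative (hermite n)) : ℝ)
          + (x^2/4 - 1/2) * hermiteP n x)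
    = (-b/2 + σ^2/8) * hermiteP (n+2) x
      + (-b/2 - σ^2 * (2*(n:ℝ)+1)/8) * hermiteP n x
      + (b/2 + σ^2/8) * (n:ℝ) * ((n:ℝ)-1) * hermiteP (n-2) x := by
  match n with
  | 0 =>
    have h0 : hermiteP 0 x = 1 := by simp [hermiteP, hermite_zero]
    have h1 : hermiteP 1 x = x := by simp [hermiteP, hermite_one]
    have h2 := recv 0 x
    have hd : (aeval x (derivative (hermite 0)) : ℝ) = 0 := by
      simp [hermite_zero]
    have hdd : (aeval x (derivative (derivative (hermite 0))) : ℝ) = 0 := by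
      simp [hermite_zero]
    rw [h0, h1] at h2
    simp only [show (0:ℕ)+2 = 2 by omega, show (0:ℕ)+1 = 1 by omega] at h2
    rw [hd, hdd, h0]
    simp only [show (0:ℕ)+2 = 2 by omega, show (0:ℕ)-2 = 0 by omega, h0]
    push_cast at h2 ⊢
    linear_combination (-b/2 + σ^2/8) * h2
  | 1 =>
    have h0 : hermiteP 0 x = 1 := by simp [hermiteP, hermite_zero]
    have h1 : hermiteP 1 x = x := by simp [hermiteP, hermite_one]
    have h2 := recv 0 x
    have h3 := recv 1 x
    have hd : (aeval x (derivative (hermite 1)) : ℝ) = 1 := by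
      simp [hermite_one]
    have hdd : (aeval x (derivative (derivative (hermite 1))) : ℝ) = 0 := by
      simp [hermite_one]
    rw [h0, h1] at h2
    rw [h1] at h3
    simp only [show (0:ℕ)+2 = 2 by omega, show (0:ℕ)+1 = 1 by omega,
      show (1:ℕ)+2 = 3 by omega, show (1:ℕ)+1 = 2 by omega] at h2 h3
    rw [hd, hdd, h1]
    simp only [show (1:ℕ)+2 = 3 by omega, show (1:ℕ)-2 = 0 by omega, h0]
    push_cast at h2 h3 ⊢
    linear_combination ((-b/2 + σ^2/8) * x) * h2 + (-b/2 + σ^2/8) * h3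
  | (k+2) =>
    have f1 := recv k x
    have f2 := recv (k+1) x
    have f3 := recv (k+2) x
    have f4 := dval (k+1) x
    have f5 := ddval k x
    simp only [show k+1+1 = k+2 by omega, show k+1+2 = k+3 by omega,
      show k+2+1 = k+3 by omega, show k+2+2 = k+4 by omega,
      show k+2-2 = k by omega] at f1 f2 f3 f4 f5 ⊢
    push_cast at f1 f2 f3 f4 f5 ⊢
    linear_combination ((b/2 - 3*σ^2/8) * ((k:ℝ)+2)) * f1
      + ((-b/2 + σ^2/8) * x) * f2 + (-b/2 + σ^2/8) * f3
      + ((b - σ^2/2) * x) * f4 + (σ^2/2) * f5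

lemma intg (m j : ℕ) :
    Integrable (fun x : ℝ => hermiteP m x * hermiteP j x * Real.exp (-x ^ 2 / 2)) := by
  refine integrable_of_eq _ ((hermite m).map (Int.castRingHom ℝ) *
    (hermite j).map (Int.castRingHom ℝ)) fun x => ?_
  simp [hermiteP_eq_eval]

lemma master (b σ : ℝ) (m n : ℕ) :
    (∫ x : ℝ, hermiteB m x * genL b σ (hermiteB n) x) =
      (2 * Real.pi) ^ (-(1:ℝ)/2) /
        (Real.sqrt (Nat.factorial m) * Real.sqrt (Nat.factorial n)) *
      ((-b/2 + σ^2/8) * HI m (n+2)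
        + (-b/2 - σ^2 * (2*(n:ℝ)+1)/8) * HI m n
        + (b/2 + σ^2/8) * (n:ℝ) * ((n:ℝ)-1) * HI m (n-2)) := by
  have hptw : ∀ x : ℝ, hermiteB m x * genL b σ (hermiteB n) x =
      (2 * Real.pi) ^ (-(1:ℝ)/2) /
        (Real.sqrt (Nat.factorial m) * Real.sqrt (Nat.factorial n)) *
      ((-b/2 + σ^2/8) * (hermiteP m x * hermiteP (n+2) x * Real.exp (-x ^ 2 / 2))
        + ((-b/2 - σ^2 * (2*(n:ℝ)+1)/8) * (hermiteP m x * hermiteP n x * Real.exp (-x ^ 2 / 2))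
        + (b/2 + σ^2/8) * (n:ℝ) * ((n:ℝ)-1) *
            (hermiteP m x * hermiteP (n-2) x * Real.exp (-x ^ 2 / 2)))) := by
    intro x
    rw [integrand_eq b σ n m x, Qid b σ n x]
    ring
  rw [show (fun x : ℝ => hermiteB m x * genL b σ (hermiteB n) x) = _ from funext hptw]
  rw [integral_const_mul]
  have hg : Integrable (fun x : ℝ =>
      (-b/2 - σ^2 * (2*(n:ℝ)+1)/8) * (hermiteP m x * hermiteP n x * Real.exp (-x ^ 2 / 2))
      + (b/2 + σ^2/8) * (n:ℝ) * ((n:ℝ)-1) *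
          (hermiteP m x * hermiteP (n-2) x * Real.exp (-x ^ 2 / 2))) :=
    ((intg m n).const_mul _).add ((intg m (n-2)).const_mul _)
  rw [integral_add ((intg m (n+2)).const_mul _) hg]
  rw [integral_add ((intg m n).const_mul _) ((intg m (n-2)).const_mul _)]
  rw [integral_const_mul, integral_const_mul, integral_const_mul]
  rw [HI, HI, HI]
  ring


lemma third_zero (c : ℝ) (m n : ℕ) (h : m + 2 ≠ n) :
    c * (n:ℝ) * ((n:ℝ)-1) * HI m (n-2) = 0 := by
  match n with
  | 0 => norm_num
  | 1 => norm_num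
  | (k+2) =>
    rw [HI_eq, if_neg (by omega)]
    ring

lemma rpow_half_cancel : (2 * Real.pi) ^ (-(1:ℝ)/2) * Real.sqrt (2*Real.pi) = 1 := by
  rw [Real.sqrt_eq_rpow, ← Real.rpow_add (by positivity)]
  norm_num

end Aux

/-- Entries of the matrix A of the Galerkin approximation w.r.t. the Hermite basis
(0-based indexing). -/
theorem galerkin_matrix_A (b σ : ℝ) (m n : ℕ) :
    (m = n →
      (∫ x : ℝ, hermiteB m x * genL b σ (hermiteB n) x) =
        -b / 2 - σ ^ 2 * (2 * (n : ℝ) + 1) / 8) ∧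
    (m = n + 2 →
      (∫ x : ℝ, hermiteB m x * genL b σ (hermiteB n) x) =
        (-b / 2 + σ ^ 2 / 8) * Real.sqrt (((n : ℝ) + 1) * ((n : ℝ) + 2))) ∧
    (m + 2 = n →
      (∫ x : ℝ, hermiteB m x * genL b σ (hermiteB n) x) =
        (b / 2 + σ ^ 2 / 8) * Real.sqrt ((n : ℝ) * ((n : ℝ) - 1))) ∧
    (m ≠ n → m ≠ n + 2 → m + 2 ≠ n →
      (∫ x : ℝ, hermiteB m x * genL b σ (hermiteB n) x) = 0) := by
  have hp := rpow_half_cancel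
  refine ⟨?_, ?_, ?_, ?_⟩
  · -- m = n
    intro h; subst h
    have hX : Real.sqrt (Nat.factorial m) * Real.sqrt (Nat.factorial m)
        = ((Nat.factorial m : ℝ)) := Real.mul_self_sqrt (by positivity)
    have hne : ((Nat.factorial m : ℝ)) ≠ 0 := by positivity
    rw [master, HI_eq, HI_eq, if_neg (by omega), if_pos rfl,
      third_zero _ _ _ (by omega), hX, div_mul_eq_mul_div, div_eq_iff hne]
    linear_combination ((-b/2 - σ^2 * (2*(m:ℝ)+1)/8) * (Nat.factorial m : ℝ)) * hp
  · -- m = n + 2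
    intro h; subst h
    have hX : Real.sqrt (Nat.factorial n) * Real.sqrt (Nat.factorial n)
        = ((Nat.factorial n : ℝ)) := Real.mul_self_sqrt (by positivity)
    have hfac2 : ((Nat.factorial (n+2) : ℝ)) = (((n:ℝ)+1)*((n:ℝ)+2)) * (Nat.factorial n : ℝ) := by
      simp [Nat.factorial_succ]
      push_cast
      ring
    have hsq : Real.sqrt (Nat.factorial (n+2)) =
        Real.sqrt (((n:ℝ)+1)*((n:ℝ)+2)) * Real.sqrt (Nat.factorial n) := by
      rw [hfac2, Real.sqrt_mul (by positivity)]
    have hT : Real.sqrt (((n:ℝ)+1)*((n:ℝ)+2)) * Real.sqrt (((n:ℝ)+1)*((n:ℝ)+2))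
        = ((n:ℝ)+1)*((n:ℝ)+2) := Real.mul_self_sqrt (by positivity)
    have hTne : Real.sqrt (((n:ℝ)+1)*((n:ℝ)+2)) ≠ 0 := by positivity
    have hXne : Real.sqrt (Nat.factorial n) ≠ 0 := by positivity
    have hDne : Real.sqrt (((n:ℝ)+1)*((n:ℝ)+2)) * Real.sqrt (Nat.factorial n)
        * Real.sqrt (Nat.factorial n) ≠ 0 := by positivity
    rw [master, HI_eq, HI_eq, if_pos rfl, if_neg (by omega),
      third_zero _ _ _ (by omega), hsq, hfac2, div_mul_eq_mul_div, div_eq_iff hDne]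
    linear_combination ((-b/2 + σ^2/8) * (((n:ℝ)+1)*((n:ℝ)+2)) * (Nat.factorial n : ℝ)) * hp
      - ((-b/2 + σ^2/8) * Real.sqrt (Nat.factorial n) * Real.sqrt (Nat.factorial n)) * hT
      - ((-b/2 + σ^2/8) * (((n:ℝ)+1)*((n:ℝ)+2))) * hX
  · -- m + 2 = n
    intro h; subst h
    have hX : Real.sqrt (Nat.factorial m) * Real.sqrt (Nat.factorial m)
        = ((Nat.factorial m : ℝ)) := Real.mul_self_sqrt (by positivity)
    have hfac2 : ((Nat.factorial (m+2) : ℝ)) = (((m:ℝ)+1)*((m:ℝ)+2)) * (Nat.factorial m : ℝ) := by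
      simp [Nat.factorial_succ]
      push_cast
      ring
    have hsq : Real.sqrt (Nat.factorial (m+2)) =
        Real.sqrt (((m:ℝ)+1)*((m:ℝ)+2)) * Real.sqrt (Nat.factorial m) := by
      rw [hfac2, Real.sqrt_mul (by positivity)]
    have hT : Real.sqrt (((m:ℝ)+1)*((m:ℝ)+2)) * Real.sqrt (((m:ℝ)+1)*((m:ℝ)+2))
        = ((m:ℝ)+1)*((m:ℝ)+2) := Real.mul_self_sqrt (by positivity)
    have hTne : Real.sqrt (((m:ℝ)+1)*((m:ℝ)+2)) ≠ 0 := by positivity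
    have hXne : Real.sqrt (Nat.factorial m) ≠ 0 := by positivity
    have hrhs : Real.sqrt (((m+2:ℕ):ℝ) * (((m+2:ℕ):ℝ) - 1))
        = Real.sqrt (((m:ℝ)+1)*((m:ℝ)+2)) := by
      push_cast
      rw [show ((m:ℝ)+2)*(((m:ℝ)+2)-1) = ((m:ℝ)+1)*((m:ℝ)+2) by ring]
    have hDne : Real.sqrt (Nat.factorial m) * (Real.sqrt (((m:ℝ)+1)*((m:ℝ)+2))
        * Real.sqrt (Nat.factorial m)) ≠ 0 := by positivity
    rw [master, HI_eq, HI_eq, if_neg (by omega), if_neg (by omega),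
      Nat.add_sub_cancel, HI_eq, if_pos rfl, hrhs, hsq]
    push_cast
    rw [div_mul_eq_mul_div, div_eq_iff hDne]
    linear_combination ((b/2 + σ^2/8) * (((m:ℝ)+1)*((m:ℝ)+2)) * (Nat.factorial m : ℝ)) * hp
      - ((b/2 + σ^2/8) * Real.sqrt (Nat.factorial m) * Real.sqrt (Nat.factorial m)) * hT
      - ((b/2 + σ^2/8) * (((m:ℝ)+1)*((m:ℝ)+2))) * hX
  · -- otherwise
    intro h1 h2 h3
    rw [master, HI_eq, HI_eq, if_neg h2, if_neg h1, third_zero _ _ _ h3]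
    ring
end

section
/- Let X be a real Banach space, let L : X → X be a continuous linear operator, and let γ ≥ 0 be such that the operator norms satisfy ‖L^n‖ ≤ γ^n / √(n!) for all n ∈ ℕ. Then the series ∑_{n=0}^{∞} L^n converges in operator norm to a continuous linear operator M with ‖M‖ ≤ (2/√3) · e^{2γ²}, M is a two-sided inverse of (I − L) (where I is the identity), and for every ξ⁰ ∈ X the element ξ = M ξ⁰ is the unique solution in X of the equation ξ = ξ⁰ + L ξ. -/
open Real

/-- Neumann-series inverse of I − L for a quasinilpotent operator with
‖L^n‖ ≤ γ^n/√(n!): the series ∑ L^n converges in operator norm to M, with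
‖M‖ ≤ (2/√3)e^{2γ²}, M is a two-sided inverse of I − L, and for each ξ⁰ the
element M ξ⁰ is the unique solution of ξ = ξ⁰ + L ξ. -/
theorem neumann_series_solution {X : Type*} [NormedAddCommGroup X] [NormedSpace ℝ X]
    [CompleteSpace X] (L : X →L[ℝ] X) (γ : ℝ) (hγ : 0 ≤ γ)
    (hL : ∀ n : ℕ, ‖L ^ n‖ ≤ γ ^ n / Real.sqrt (Nat.factorial n)) :
    ∃ M : X →L[ℝ] X,
      HasSum (fun n : ℕ => L ^ n) M ∧
      ‖M‖ ≤ 2 / Real.sqrt 3 * Real.exp (2 * γ ^ 2) ∧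
      M * (1 - L) = 1 ∧ (1 - L) * M = 1 ∧
      ∀ ξ0 : X, M ξ0 = ξ0 + L (M ξ0) ∧ ∀ ξ : X, ξ = ξ0 + L ξ → ξ = M ξ0 := by
  set f : ℕ → ℝ := fun n => γ ^ n / Real.sqrt (Nat.factorial n) with hf
  have hfnonneg : ∀ n, 0 ≤ f n := fun n => by
    apply div_nonneg (pow_nonneg hγ n) (Real.sqrt_nonneg _)
  -- f n ≤ (1/2) * ((4γ²)^n/n! + (1/4)^n)
  have hmaj : ∀ n, f n ≤ (1/2) * ((4*γ^2) ^ n / (Nat.factorial n) + (1/4) ^ n) := by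
    intro n
    have hfac : (0:ℝ) < Real.sqrt (Nat.factorial n) := by
      apply Real.sqrt_pos.2; exact_mod_cast Nat.factorial_pos n
    have key : f n = ((2*γ)^n / Real.sqrt (Nat.factorial n)) * (1/2)^n := by
      show γ ^ n / Real.sqrt (Nat.factorial n) = _
      rw [mul_pow, mul_div_assoc, mul_comm ((2:ℝ)^n), mul_assoc, ← mul_pow]; norm_num
    rw [key]
    have h1 : ((2*γ)^n / Real.sqrt (Nat.factorial n)) * (1/2)^n ≤
        (1/2) * (((2*γ)^n / Real.sqrt (Nat.factorial n))^2 + ((1/2:ℝ)^n)^2) := by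
      have := sq_nonneg ((2*γ)^n / Real.sqrt (Nat.factorial n) - (1/2:ℝ)^n)
      nlinarith
    refine h1.trans (le_of_eq ?_)
    have h2 : ((2*γ)^n / Real.sqrt (Nat.factorial n))^2 = (4*γ^2)^n / (Nat.factorial n) := by
      rw [div_pow, Real.sq_sqrt (by positivity), ← pow_mul, mul_comm n 2, pow_mul,
        show ((2*γ)^2 : ℝ) = 4*γ^2 by ring]
    rw [h2]
    congr 1
    rw [← pow_mul, mul_comm n 2, pow_mul]
    norm_num
  have hsummaj : Summable (fun n => (1/2) * ((4*γ^2) ^ n / (Nat.factorial n) + (1/4:ℝ) ^ n)) := by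
    apply Summable.mul_left
    exact (Real.summable_pow_div_factorial _).add (summable_geometric_of_lt_one (by norm_num) (by norm_num))
  have hfsum : Summable f :=
    Summable.of_nonneg_of_le hfnonneg hmaj hsummaj
  have hLsum : Summable (fun n : ℕ => L ^ n) :=
    Summable.of_norm_bounded hfsum hL
  obtain ⟨M, hM⟩ := hLsum
  have hshift : HasSum (fun n : ℕ => L ^ (n+1)) (M - 1) := by
    have := (hasSum_nat_add_iff' 1).2 hM
    simpa using this
  have h2tel : HasSum (fun n : ℕ => L ^ n - L ^ (n+1)) (M - (M - 1)) := hM.sub hshift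
  have hMl : M * (1 - L) = 1 := by
    have h1 : HasSum (fun n : ℕ => L ^ n * (1 - L)) (M * (1 - L)) := hM.mul_right _
    have heq : (fun n : ℕ => L ^ n * (1 - L)) = fun n : ℕ => L ^ n - L ^ (n+1) := by
      funext n; rw [mul_sub, mul_one, pow_succ]
    rw [heq] at h1
    rw [h1.unique h2tel]; abel
  have hMr : (1 - L) * M = 1 := by
    have h1 : HasSum (fun n : ℕ => (1 - L) * L ^ n) ((1 - L) * M) := hM.mul_left _
    have heq : (fun n : ℕ => (1 - L) * L ^ n) = fun n : ℕ => L ^ n - L ^ (n+1) := by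
      funext n; rw [sub_mul, one_mul, pow_succ']
    rw [heq] at h1
    rw [h1.unique h2tel]; abel
  refine ⟨M, hM, ?_, hMl, hMr, ?_⟩
  · -- norm bound
    have h1 : ‖M‖ ≤ ∑' n, f n := by
      refine le_trans (hM.norm_le_of_bounded ?_ hL) le_rfl
      exact hfsum.hasSum
    refine h1.trans ?_
    apply Summable.tsum_le_of_sum_le hfsum
    intro s
    -- Cauchy-Schwarz on s
    have hcs : ∑ n ∈ s, f n ≤
        Real.sqrt (∑ n ∈ s, (4*γ^2)^n / (Nat.factorial n)) * Real.sqrt (∑ n ∈ s, (1/4:ℝ)^n) := by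
      have := Real.sum_mul_le_sqrt_mul_sqrt s
        (fun n => (2*γ)^n / Real.sqrt (Nat.factorial n)) (fun n => (1/2:ℝ)^n)
      have heq : ∀ n ∈ s, f n =
          ((2*γ)^n / Real.sqrt (Nat.factorial n)) * (1/2:ℝ)^n := by
        intro n _
        have hfac : (0:ℝ) < Real.sqrt (Nat.factorial n) := by
          apply Real.sqrt_pos.2; exact_mod_cast Nat.factorial_pos n
        show γ ^ n / Real.sqrt (Nat.factorial n) = _
        rw [mul_pow, mul_div_assoc, mul_comm ((2:ℝ)^n), mul_assoc, ← mul_pow]; norm_num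
      rw [Finset.sum_congr rfl heq]
      refine this.trans (le_of_eq ?_)
      congr 1
      · congr 1
        apply Finset.sum_congr rfl
        intro n _
        rw [div_pow, Real.sq_sqrt (by positivity), ← pow_mul, mul_comm n 2, pow_mul,
          show ((2*γ)^2 : ℝ) = 4*γ^2 by ring]
      · congr 1
        apply Finset.sum_congr rfl
        intro n _
        rw [← pow_mul, mul_comm n 2, pow_mul]
        norm_num
    refine hcs.trans ?_
    have hA : Real.sqrt (∑ n ∈ s, (4*γ^2)^n / (Nat.factorial n)) ≤ Real.exp (2*γ^2) := by
      have hsub : ∑ n ∈ s, (4*γ^2)^n / (Nat.factorial n) ≤ Real.exp (4*γ^2) := by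
        obtain ⟨N, hN⟩ := s.exists_nat_subset_range
        calc ∑ n ∈ s, (4*γ^2)^n / (Nat.factorial n)
            ≤ ∑ n ∈ Finset.range N, (4*γ^2)^n / (Nat.factorial n) :=
              Finset.sum_le_sum_of_subset_of_nonneg hN (fun n _ _ => by positivity)
          _ ≤ Real.exp (4*γ^2) := Real.sum_le_exp_of_nonneg (by positivity) N
      calc Real.sqrt (∑ n ∈ s, (4*γ^2)^n / (Nat.factorial n))
          ≤ Real.sqrt (Real.exp (4*γ^2)) := Real.sqrt_le_sqrt hsub
        _ = Real.exp (2*γ^2) := by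
            rw [show (4:ℝ)*γ^2 = 2*γ^2 + 2*γ^2 by ring, Real.exp_add,
              Real.sqrt_mul_self (Real.exp_pos _).le]
    have hB : Real.sqrt (∑ n ∈ s, (1/4:ℝ)^n) ≤ 2 / Real.sqrt 3 := by
      have hsub : ∑ n ∈ s, (1/4:ℝ)^n ≤ 4/3 := by
        have := Summable.sum_le_tsum s (fun n _ => by positivity)
          (summable_geometric_of_lt_one (by norm_num) (by norm_num : (1/4:ℝ) < 1))
        rwa [tsum_geometric_of_lt_one (by norm_num) (by norm_num), show ((1:ℝ) - 1/4)⁻¹ = 4/3 by norm_num] at this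
      calc Real.sqrt (∑ n ∈ s, (1/4:ℝ)^n) ≤ Real.sqrt (4/3) := Real.sqrt_le_sqrt hsub
        _ = 2 / Real.sqrt 3 := by
            rw [show (4:ℝ)/3 = (2/Real.sqrt 3)^2 by
              rw [div_pow, Real.sq_sqrt (by norm_num)]; norm_num]
            exact Real.sqrt_sq (by positivity)
    calc Real.sqrt (∑ n ∈ s, (4*γ^2)^n / (Nat.factorial n)) * Real.sqrt (∑ n ∈ s, (1/4:ℝ)^n)
        ≤ Real.exp (2*γ^2) * (2 / Real.sqrt 3) :=
          mul_le_mul hA hB (Real.sqrt_nonneg _) (Real.exp_pos _).le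
      _ = 2 / Real.sqrt 3 * Real.exp (2*γ^2) := by ring
  · intro ξ0
    constructor
    · have := congrArg (fun T : X →L[ℝ] X => T ξ0) hMr
      simp only [ContinuousLinearMap.mul_apply, ContinuousLinearMap.sub_apply,
        ContinuousLinearMap.one_apply] at this
      exact sub_eq_iff_eq_add.mp this
    · intro ξ hξ
      have hx : (1 - L) ξ = ξ0 := by
        simp only [ContinuousLinearMap.sub_apply, ContinuousLinearMap.one_apply]
        nth_rewrite 1 [hξ]; abel
      have h := congrArg (fun T : X →L[ℝ] X => T ξ) hMl
      simp only [ContinuousLinearMap.mul_apply, ContinuousLinearMap.one_apply] at h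
      rw [hx] at h
      exact h.symm
end
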